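/- For all nonnegative integers k <= h with h+k even and positive integers r, s: (-1)^s * 2^(s*3^k - 1) ≡ (-1)^r * 2^(r*3^h - 1) modulo 3^(k+1). -/
import Mathlib

lemma two_pow_three_pow (k : ℕ) : (2:ℤ)^(3^k) ≡ -1 [ZMOD (3:ℤ)^(k+1)] := by
  induction k with
  | zero => decide
  | succ k ih =>
    obtain ⟨t, ht⟩ := Int.ModEq.dvd ih
    have hx : (2:ℤ)^(3^k) = -1 - 3^(k+1) * t := by linarith
    have hp : (2:ℤ)^(3^(k+1)) = ((2:ℤ)^(3^k))^3 := by
      rw [← pow_mul, pow_succ, Nat.mul_comm]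
    have hdvd : (3:ℤ)^(k+1+1) ∣ -1 - (2:ℤ)^(3^(k+1)) := by
      refine ⟨t + 3^(k+1)*t^2 + 3^(2*k+1)*t^3, ?_⟩
      rw [hp, hx]; ring
    exact Int.modEq_iff_dvd.mpr hdvd

lemma key (k h : ℕ) (hkh : k ≤ h) :
    (2:ℤ)^(3^h) ≡ -1 [ZMOD (3:ℤ)^(k+1)] := by
  obtain ⟨d, rfl⟩ := Nat.exists_eq_add_of_le hkh
  calc (2:ℤ)^(3^(k+d)) = ((2:ℤ)^(3^k))^(3^d) := by rw [← pow_mul, ← pow_add]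
    _ ≡ (-1)^(3^d) [ZMOD (3:ℤ)^(k+1)] := (two_pow_three_pow k).pow _
    _ = -1 := Odd.neg_one_pow (Odd.pow (by decide))

theorem symmetry_q_three (k h r s : ℕ) (hr : 0 < r) (hs : 0 < s) (hkh : k ≤ h)
    (heven : Even (h + k)) :
    ((-1 : ℤ) ^ s * 2 ^ (s * 3 ^ k - 1)) ≡ ((-1 : ℤ) ^ r * 2 ^ (r * 3 ^ h - 1))
      [ZMOD (3 : ℤ) ^ (k + 1)] := by
  have hgcd : Int.gcd ((3:ℤ)^(k+1)) 2 = 1 := by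
    have : Nat.Coprime (3^(k+1)) 2 := (Nat.coprime_two_right.mpr (Odd.pow (by decide)))
    simpa [Int.gcd, Int.natAbs_pow] using this
  have one_le_s : 1 ≤ s * 3^k := Nat.one_le_iff_ne_zero.mpr (by positivity)
  have one_le_r : 1 ≤ r * 3^h := Nat.one_le_iff_ne_zero.mpr (by positivity)
  have p1 : ((2:ℤ)^(3^k))^s = 2 * 2^(s*3^k-1) := by
    rw [← pow_mul, mul_comm (3^k) s]
    conv_lhs => rw [← Nat.sub_add_cancel one_le_s]
    rw [pow_succ]; ring
  have p2 : ((2:ℤ)^(3^h))^r = 2 * 2^(r*3^h-1) := by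
    rw [← pow_mul, mul_comm (3^h) r]
    conv_lhs => rw [← Nat.sub_add_cancel one_le_r]
    rw [pow_succ]; ring
  have c1 : 2 * ((-1:ℤ)^s * 2^(s*3^k-1)) ≡ 1 [ZMOD (3:ℤ)^(k+1)] := by
    calc 2 * ((-1:ℤ)^s * 2^(s*3^k-1)) = (-1)^s * ((2:ℤ)^(3^k))^s := by rw [p1]; ring
      _ ≡ (-1)^s * (-1)^s [ZMOD (3:ℤ)^(k+1)] :=
          Int.ModEq.mul_left _ ((two_pow_three_pow k).pow _)
      _ = 1 := by rw [← mul_pow]; norm_num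
  have c2 : 2 * ((-1:ℤ)^r * 2^(r*3^h-1)) ≡ 1 [ZMOD (3:ℤ)^(k+1)] := by
    calc 2 * ((-1:ℤ)^r * 2^(r*3^h-1)) = (-1)^r * ((2:ℤ)^(3^h))^r := by rw [p2]; ring
      _ ≡ (-1)^r * (-1)^r [ZMOD (3:ℤ)^(k+1)] :=
          Int.ModEq.mul_left _ ((key k h hkh).pow _)
      _ = 1 := by rw [← mul_pow]; norm_num
  have := Int.ModEq.cancel_left_div_gcd (show (0:ℤ) < 3^(k+1) by positivity)
    (c1.trans c2.symm)
  simpa [hgcd] using this
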